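/- Let G be a locally finite graph whose vertex set can be partitioned into sets {V_i : i ∈ I} such that the subgraph induced by each V_i is isomorphic to the 4-regular tree, and suppose G has maximum degree D < ∞. Then for every finite nonempty set K of vertices, |∂_E K| ≥ |K|, and hence |∂_E K| / ∑_{v∈K} deg(v) ≥ 1/D; in particular G is nonamenable. -/

import Mathlib

/-- The edge boundary of a set `K` of vertices: the set of edges of `G` with exactly
one endpoint in `K`. -/
def edgeBdry {V : Type*} (G : SimpleGraph V) (K : Set V) : Set (Sym2 V) :=
  {e | e ∈ G.edgeSet ∧ ∃ u v : V, e = s(u, v) ∧ u ∈ K ∧ v ∉ K}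

open Finset

/-- In a tree in which every vertex has exactly 4 neighbours, summing over `v ∈ K` the
number of neighbours of `v` outside the finite set `K` gives at least `|K|`. -/
lemma tree_boundary_count {W : Type*} {H : SimpleGraph W} (hT : H.IsTree)
    (hdeg : ∀ v : W, (H.neighborSet v).ncard = 4) (K : Finset W) :
    K.card ≤ ∑ v ∈ K, (H.neighborSet v \ (K : Set W)).ncard := by
  classical
  rcases K.eq_empty_or_nonempty with rfl | ⟨r, hr⟩
  · simp
  choose up hup hun using fun v => hT.existsUnique_path v r
  set pa : W → W := fun v => (up v).getVert 1 with hpa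
  have hup_r : up r = SimpleGraph.Walk.nil := (hun r _ SimpleGraph.Walk.IsPath.nil).symm
  have hparr : pa r = r := by
    show (up r).getVert 1 = r
    rw [hup_r]
    rfl
  have claimA : ∀ a b, H.Adj a b → pa a = b ∨ pa b = a := by
    intro a b hab
    by_cases h1 : a ∈ (up b).support
    · right
      have ht : ((up b).takeUntil a h1).IsPath := (hup b).takeUntil h1
      have hc : (SimpleGraph.Walk.cons hab.symm SimpleGraph.Walk.nil : H.Walk b a).IsPath := by
        simp [hab.symm.ne]
      have hpq := hT.IsAcyclic.path_unique ⟨(up b).takeUntil a h1, ht⟩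
        ⟨SimpleGraph.Walk.cons hab.symm SimpleGraph.Walk.nil, hc⟩
      have heq : (up b).takeUntil a h1
          = SimpleGraph.Walk.cons hab.symm SimpleGraph.Walk.nil := congrArg Subtype.val hpq
      have hspec := SimpleGraph.Walk.take_spec (up b) h1
      rw [heq] at hspec
      show (up b).getVert 1 = a
      rw [← hspec]
      simp [SimpleGraph.Walk.cons_append, SimpleGraph.Walk.getVert_cons_succ]
    · left
      have hc : (SimpleGraph.Walk.cons hab (up b)).IsPath := (hup b).cons h1
      have hco : SimpleGraph.Walk.cons hab (up b) = up a := hun a _ hc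
      show (up a).getVert 1 = b
      rw [← hco]
      simp [SimpleGraph.Walk.getVert_cons_succ]
  -- count adjacent ordered pairs inside K
  set S : Finset (W × W) := (K ×ˢ K).filter (fun p => H.Adj p.1 p.2) with hS
  have hScard : S.card = ∑ v ∈ K, (K.filter (fun w => H.Adj v w)).card := by
    rw [hS, card_filter, Finset.sum_product]
    exact Finset.sum_congr rfl fun v _ => by rw [card_filter]
  have hSle : S.card ≤ ((K.erase r) ×ˢ ({true, false} : Finset Bool)).card := by
    apply Finset.card_le_card_of_injOn
      (fun p => if pa p.1 = p.2 then (p.1, true) else (p.2, false))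
    · rintro ⟨a, b⟩ hab
      simp only [hS, mem_coe, mem_filter, mem_product] at hab
      obtain ⟨⟨haK, hbK⟩, hadj⟩ := hab
      by_cases hcase : pa a = b
      · simp only [mem_coe, if_pos hcase]
        refine mem_product.2 ⟨mem_erase.2 ⟨?_, haK⟩, by simp⟩
        rintro rfl
        rw [hparr] at hcase
        exact hadj.ne hcase
      · simp only [mem_coe, if_neg hcase]
        have hpb : pa b = a := (claimA a b hadj).resolve_left hcase
        refine mem_product.2 ⟨mem_erase.2 ⟨?_, hbK⟩, by simp⟩
        rintro rfl
        rw [hparr] at hpb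
        exact hadj.ne hpb.symm
    · rintro ⟨a, b⟩ hab ⟨a', b'⟩ hab' hψ
      simp only [hS, coe_filter, Set.mem_setOf_eq, mem_product] at hab hab'
      obtain ⟨⟨haK, hbK⟩, hadj⟩ := hab
      obtain ⟨⟨haK', hbK'⟩, hadj'⟩ := hab'
      by_cases h1 : pa a = b <;> by_cases h2 : pa a' = b' <;>
        simp only [if_pos, if_neg, h1, h2, if_true, ite_true, ite_false, if_false,
          Prod.mk.injEq] at hψ
      · obtain ⟨rfl, -⟩ := hψ
        rw [← h1, ← h2]
      · exact absurd hψ.2 (by simp)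
      · exact absurd hψ.2 (by simp)
      · obtain ⟨rfl, -⟩ := hψ
        have hpb : pa b = a := (claimA a b hadj).resolve_left h1
        have hpb' : pa b = a' := (claimA a' b hadj').resolve_left h2
        rw [← hpb, ← hpb']
  have hcard_pairs : ((K.erase r) ×ˢ ({true, false} : Finset Bool)).card = (K.card - 1) * 2 := by
    rw [card_product, card_erase_of_mem hr]
    simp
  have hdk4 : ∀ v ∈ K,
      (H.neighborSet v \ (K : Set W)).ncard + (K.filter (fun w => H.Adj v w)).card = 4 := by
    intro v hv
    have hNfin : (H.neighborSet v).Finite :=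
      Set.finite_of_ncard_ne_zero (by rw [hdeg v]; omega)
    have h1 : (H.neighborSet v ∩ (K : Set W)) = ↑(K.filter (fun w => H.Adj v w)) := by
      ext w
      simp [SimpleGraph.mem_neighborSet, and_comm]
    have h2 := Set.ncard_inter_add_ncard_diff_eq_ncard (H.neighborSet v) (K : Set W) hNfin
    rw [h1, Set.ncard_coe_finset, hdeg v] at h2
    omega
  have hsum4 :
      ∑ v ∈ K, ((H.neighborSet v \ (K : Set W)).ncard
        + (K.filter (fun w => H.Adj v w)).card) = 4 * K.card := by
    rw [Finset.sum_congr rfl hdk4]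
    simp [mul_comm]
  rw [Finset.sum_add_distrib] at hsum4
  have h2 : ∑ v ∈ K, (K.filter (fun w => H.Adj v w)).card ≤ (K.card - 1) * 2 := by
    rw [← hScard]
    exact hcard_pairs ▸ hSle
  have hK1 : 1 ≤ K.card := Finset.card_pos.2 ⟨r, hr⟩
  omega

/-- If the vertex set of a locally finite graph `G` of maximum degree `D` can be
partitioned into sets (the fibres of `f`) each of which induces a 4-regular tree, then
`|∂_E K| ≥ |K|` for every finite nonempty `K`, hence
`|∂_E K| / ∑_{v ∈ K} deg v ≥ 1/D`; in particular `G` is nonamenable. -/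
theorem partitioned_into_trees_nonamenable {V I : Type*} (G : SimpleGraph V)
    [G.LocallyFinite] (D : ℕ) (hD0 : 0 < D) (hD : ∀ v : V, G.degree v ≤ D)
    (f : V → I)
    (htree : ∀ i : I, (G.induce {v | f v = i}).IsTree)
    (hdeg : ∀ (i : I) (v : ↥{v | f v = i}),
      ((G.induce {v | f v = i}).neighborSet v).ncard = 4) :
    (∀ K : Finset V, K.Nonempty → K.card ≤ (edgeBdry G (↑K : Set V)).ncard) ∧
    (∀ K : Finset V, K.Nonempty →
      (1 : ℝ) / D ≤ (edgeBdry G (↑K : Set V)).ncard / ∑ v ∈ K, (G.degree v : ℝ)) ∧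
    (∃ c : ℝ, 0 < c ∧ ∀ K : Finset V, K.Nonempty →
      c ≤ (edgeBdry G (↑K : Set V)).ncard / ∑ v ∈ K, (G.degree v : ℝ)) := by
  classical
  have hdegpos : ∀ v : V, 0 < G.degree v := by
    intro v
    have hne : ((G.induce {w | f w = f v}).neighborSet ⟨v, rfl⟩).Nonempty :=
      Set.nonempty_of_ncard_ne_zero (by rw [hdeg (f v) ⟨v, rfl⟩]; omega)
    obtain ⟨w, hw⟩ := hne
    exact (G.degree_pos_iff_exists_adj v).2 ⟨w, hw⟩
  have main : ∀ K : Finset V, K.card ≤ (edgeBdry G (↑K : Set V)).ncard := by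
    intro K
    set bd : V → Finset V :=
      fun v => (G.neighborFinset v).filter (fun w => f w = f v ∧ w ∉ K) with hbd
    set B : Finset (Sym2 V) := K.biUnion (fun v => (bd v).image (fun w => s(v, w))) with hB
    -- `B` is contained in the edge boundary
    have hBsub : (B : Set (Sym2 V)) ⊆ edgeBdry G (↑K : Set V) := by
      intro e he
      rw [mem_coe, hB, mem_biUnion] at he
      obtain ⟨v, hv, he⟩ := he
      rw [mem_image] at he
      obtain ⟨w, hw, rfl⟩ := he
      rw [hbd, mem_filter, SimpleGraph.mem_neighborFinset] at hw
      exact ⟨(G.mem_edgeSet).2 hw.1, v, w, rfl, hv, hw.2.2⟩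
    -- the edge boundary is finite
    have hfin : (edgeBdry G (↑K : Set V)).Finite := by
      apply Set.Finite.subset
        (K.biUnion fun v => (G.neighborFinset v).image fun w => s(v, w)).finite_toSet
      rintro e ⟨heE, u, w, rfl, huK, hwK⟩
      rw [mem_coe, mem_biUnion]
      refine ⟨u, huK, mem_image.2 ⟨w, ?_, rfl⟩⟩
      rw [SimpleGraph.mem_neighborFinset]
      exact (G.mem_edgeSet).1 heE
    have hBcard : B.card = ∑ v ∈ K, (bd v).card := by
      rw [hB, Finset.card_biUnion]
      · exact Finset.sum_congr rfl fun v hv =>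
          Finset.card_image_of_injective _ fun w w' hww => (Sym2.congr_right).1 hww
      · intro v hv v' hv' hvv'
        rw [Function.onFun, Finset.disjoint_left]
        rintro e he he'
        rw [mem_image] at he he'
        obtain ⟨w, hw, rfl⟩ := he
        obtain ⟨w', hw', he'⟩ := he'
        rw [hbd, mem_filter] at hw hw'
        rcases Sym2.eq_iff.1 he' with ⟨h1, h2⟩ | ⟨h1, h2⟩
        · exact hvv' h1.symm
        · exact hw'.2.2 (h2 ▸ hv)
    -- counting within each fibre
    have hcount : K.card ≤ ∑ v ∈ K, (bd v).card := by
      rw [Finset.card_eq_sum_card_fiberwise (fun v hv => Finset.mem_image_of_mem f hv),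
        ← Finset.sum_fiberwise_of_maps_to (fun v hv => Finset.mem_image_of_mem f hv)
          (fun v => (bd v).card)]
      refine Finset.sum_le_sum fun i _ => ?_
      have hle := tree_boundary_count (htree i) (hdeg i) (K.subtype (fun v => v ∈ {w | f w = i}))
      rw [Finset.card_subtype] at hle
      have hpt : ∀ x ∈ (K.subtype (fun v => v ∈ {w | f w = i})),
          ((G.induce {v | f v = i}).neighborSet x
            \ ((K.subtype (fun v => v ∈ {w | f w = i})) : Set ↥{v | f v = i})).ncard = (bd ↑x).card := by
        rintro ⟨v, hv⟩ -
        have himg : Subtype.val ''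
            ((G.induce {v | f v = i}).neighborSet ⟨v, hv⟩
              \ ((K.subtype (fun v => v ∈ {w | f w = i})) : Set ↥{v | f v = i}))
            = ↑(bd v) := by
          ext w
          simp only [Set.mem_image, Set.mem_diff, SimpleGraph.mem_neighborSet, mem_coe,
            Finset.mem_subtype, hbd, mem_filter, SimpleGraph.mem_neighborFinset,
            SimpleGraph.comap_adj, Function.Embedding.coe_subtype]
          constructor
          · rintro ⟨⟨x, hx⟩, ⟨hadj, hxK⟩, rfl⟩
            exact ⟨hadj, hx.trans hv.symm, hxK⟩
          · rintro ⟨hadj, hfw, hwK⟩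
            exact ⟨⟨w, hfw.trans hv⟩, ⟨hadj, hwK⟩, rfl⟩
        calc ((G.induce {v | f v = i}).neighborSet ⟨v, hv⟩
              \ ((K.subtype (fun v => v ∈ {w | f w = i})) : Set ↥{v | f v = i})).ncard
            = (Subtype.val ''
              ((G.induce {v | f v = i}).neighborSet ⟨v, hv⟩
                \ ((K.subtype (fun v => v ∈ {w | f w = i})) : Set ↥{v | f v = i}))).ncard :=
              (Set.ncard_image_of_injective _ Subtype.val_injective).symm
          _ = (bd v).card := by rw [himg, Set.ncard_coe_finset]
      rw [Finset.sum_congr rfl hpt] at hle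
      have hsub := Finset.sum_subtype_eq_sum_filter (s := K)
        (fun v => (bd v).card) (p := fun v => v ∈ {w | f w = i})
      rw [hsub] at hle
      have hfe : K.filter (fun v => v ∈ {w | f w = i}) = K.filter (fun v => f v = i) :=
        Finset.filter_congr fun x _ => Iff.rfl
      rw [hfe] at hle
      exact hle
    calc K.card ≤ ∑ v ∈ K, (bd v).card := hcount
      _ = B.card := hBcard.symm
      _ = (↑B : Set (Sym2 V)).ncard := (Set.ncard_coe_finset B).symm
      _ ≤ (edgeBdry G (↑K : Set V)).ncard := Set.ncard_le_ncard hBsub hfin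
  have part2 : ∀ K : Finset V, K.Nonempty →
      (1 : ℝ) / D ≤ (edgeBdry G (↑K : Set V)).ncard / ∑ v ∈ K, (G.degree v : ℝ) := by
    intro K hK
    have hsumpos : (0 : ℝ) < ∑ v ∈ K, (G.degree v : ℝ) :=
      Finset.sum_pos (fun v _ => Nat.cast_pos.2 (hdegpos v)) hK
    have hDpos : (0 : ℝ) < D := by exact_mod_cast hD0
    rw [div_le_div_iff₀ hDpos hsumpos, one_mul]
    calc (∑ v ∈ K, (G.degree v : ℝ)) ≤ ∑ v ∈ K, (D : ℝ) :=
          Finset.sum_le_sum fun v _ => by exact_mod_cast hD v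
      _ = (K.card : ℝ) * D := by rw [Finset.sum_const]; push_cast; ring
      _ ≤ ((edgeBdry G (↑K : Set V)).ncard : ℝ) * D :=
          mul_le_mul_of_nonneg_right (by exact_mod_cast main K) (by positivity)
  exact ⟨fun K _ => main K, part2, ⟨1 / D, by positivity, part2⟩⟩
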